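/- arXiv:1612.08199 — 2 statements merged into one kernel-verified Lean document; each statement's English description precedes it below -/
import Mathlib

section
/- Assume the axiom set A satisfies nono(A) and cov(A) with respect to the functional dependency declarations F. If S improves P (via the Fundep rule, with S a most general unifier of the determined positions), then gr_A(P) = gr_A(S P): the satisfiable ground instances of the predicate list P coincide with those of S P. -/
/-- Types: variables, constants, and function types. -/
inductive Ty : Type
  | var : ℕ → Ty
  | const : ℕ → Ty
  | arrow : Ty → Ty → Ty
  deriving DecidableEq

/-- A type is ground if it contains no variables. -/
def Ty.Ground : Ty → Prop
  | .var _ => False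
  | .const _ => True
  | .arrow t u => t.Ground ∧ u.Ground

/-- Homomorphic extension of a substitution `S : ℕ → Ty` to types. -/
def Ty.subst (S : ℕ → Ty) : Ty → Ty
  | .var n => S n
  | .const k => .const k
  | .arrow t u => .arrow (t.subst S) (u.subst S)

/-- A substitution is ground if it maps every variable to a ground type. -/
def GroundSubst (S : ℕ → Ty) : Prop := ∀ n, (S n).Ground

/-- A predicate `C τ⃗`: a class name applied to a list of types. -/
structure OPred : Type where
  cls : ℕ
  args : List Ty
  deriving DecidableEq

/-- Substitutions act on predicates argumentwise. -/
def OPred.subst (S : ℕ → Ty) (p : OPred) : OPred := ⟨p.cls, p.args.map (Ty.subst S)⟩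

/-- An instance axiom `Q ⇒ π₀` with context `Q` and head `π₀`. -/
structure Axm : Type where
  ctx : List OPred
  head : OPred

/-- The entailment relation `P ⊩_A π`. -/
inductive Entails (A : Set Axm) : Set OPred → OPred → Prop
  | assume {P : Set OPred} {π : OPred} : π ∈ P → Entails A P π
  | axm {P : Set OPred} {ax : Axm} {S : ℕ → Ty} {π : OPred} :
      ax ∈ A → ax.head.subst S = π →
      (∀ q ∈ ax.ctx, Entails A P (q.subst S)) →
      Entails A P π

/-- The set of variable indices occurring in a type. -/
def Ty.vars : Ty → Set ℕ
  | .var n => {n}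
  | .const _ => ∅
  | .arrow t u => t.vars ∪ u.vars

/-- Two lists of types agree at every position in `X`. -/
def AgreeOn (X : Set ℕ) (ts us : List Ty) : Prop := ∀ i ∈ X, ts[i]? = us[i]?

/-- `ftv_X(π)`: the variables occurring in the arguments of `π` at positions in `X`. -/
def OPred.ftvAt (π : OPred) (X : Set ℕ) : Set ℕ :=
  ⋃ i ∈ X, (match π.args[i]? with | some t => t.vars | none => ∅)

/-- Membership in the varClosure `J⁺_D` of a variable set `J` under dependencies `D`. -/
inductive InClosure (D : Set (Set ℕ × Set ℕ)) (J : Set ℕ) : ℕ → Prop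
  | base {n : ℕ} : n ∈ J → InClosure D J n
  | step {U V : Set ℕ} {n : ℕ} : (U, V) ∈ D → (∀ m ∈ U, InClosure D J m) → n ∈ V →
      InClosure D J n

/-- The varClosure `J⁺_D`: the least superset of `J` such that whenever `(U ⇝ V) ∈ D`
and `U ⊆ J⁺_D` then `V ⊆ J⁺_D`. -/
def varClosure (D : Set (Set ℕ × Set ℕ)) (J : Set ℕ) : Set ℕ := { n | InClosure D J n }

/-- `fd(F, P)`: the instantiations of the functional dependencies of `F` at the
predicates of `P`. -/
def fdInst (F : Set (ℕ × Set ℕ × Set ℕ)) (P : Set OPred) : Set (Set ℕ × Set ℕ) :=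
  { d | ∃ π ∈ P, ∃ X Y, (π.cls, X, Y) ∈ F ∧ d = (π.ftvAt X, π.ftvAt Y) }

/-- `nono(A)`: no two distinct axioms of the same class overlap on the determining
positions of a declared functional dependency. -/
def Nono (F : Set (ℕ × Set ℕ × Set ℕ)) (A : Set Axm) : Prop :=
  ∀ ax ∈ A, ∀ ax' ∈ A, ax ≠ ax' → ax.head.cls = ax'.head.cls →
    ∀ X Y : Set ℕ, (ax.head.cls, X, Y) ∈ F →
      ¬ ∃ S₀ S₁ : ℕ → Ty,
        AgreeOn X (ax.head.args.map (Ty.subst S₀)) (ax'.head.args.map (Ty.subst S₁))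

/-- `cov(A)`: for every axiom and every functional dependency of its class, the
variables in the determined positions are in the varClosure of the variables in the
determining positions under the dependencies induced by the axiom's context. -/
def Cov (F : Set (ℕ × Set ℕ × Set ℕ)) (A : Set Axm) : Prop :=
  ∀ ax ∈ A, ∀ X Y : Set ℕ, (ax.head.cls, X, Y) ∈ F →
    ax.head.ftvAt Y ⊆ varClosure (fdInst F { q | q ∈ ax.ctx }) (ax.head.ftvAt X)

/-- `S improves P` by the Fundep rule: there are two predicates of a class `C`
entailed by `P` that agree on the determining positions `X` of a declared dependency
`(C, X, Y)`, and `S` is a most general unifier of their determined positions `Y`. -/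
def Improves (F : Set (ℕ × Set ℕ × Set ℕ)) (A : Set Axm) (S : ℕ → Ty)
    (P : List OPred) : Prop :=
  ∃ (C : ℕ) (τs υs : List Ty) (X Y : Set ℕ),
    Entails A { π | π ∈ P } ⟨C, τs⟩ ∧
    Entails A { π | π ∈ P } ⟨C, υs⟩ ∧
    (C, X, Y) ∈ F ∧
    AgreeOn X τs υs ∧
    (∀ y ∈ Y, τs[y]?.map (Ty.subst S) = υs[y]?.map (Ty.subst S)) ∧
    (∀ U : ℕ → Ty, (∀ y ∈ Y, τs[y]?.map (Ty.subst U) = υs[y]?.map (Ty.subst U)) →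
      ∃ U' : ℕ → Ty, ∀ n, U n = Ty.subst U' (S n))

/-- `gr_A(P)`: the satisfiable ground instances of the predicate list `P`. -/
def grPreds (A : Set Axm) (P : List OPred) : Set (List OPred) :=
  { Q | ∃ U : ℕ → Ty, GroundSubst U ∧ (∀ π ∈ P, Entails A ∅ (π.subst U)) ∧
        Q = P.map (OPred.subst U) }


section Aux

open Classical in
noncomputable def groundify (U : ℕ → Ty) : ℕ → Ty :=
  fun n => if (U n).Ground then U n else Ty.const 0

lemma groundify_ground (U : ℕ → Ty) : GroundSubst (groundify U) := by
  intro n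
  unfold groundify
  split
  · assumption
  · trivial

lemma Ty.subst_comp (U S : ℕ → Ty) (t : Ty) :
    Ty.subst U (Ty.subst S t) = Ty.subst (fun n => Ty.subst U (S n)) t := by
  induction t with
  | var n => rfl
  | const k => rfl
  | arrow a b iha ihb => simp [Ty.subst, iha, ihb]

lemma OPred.subst_comp (U S : ℕ → Ty) (p : OPred) :
    (p.subst S).subst U = p.subst (fun n => Ty.subst U (S n)) := by
  simp [OPred.subst, List.map_map, Function.comp_def, Ty.subst_comp]

lemma Ty.ground_subst {U : ℕ → Ty} (hU : GroundSubst U) (t : Ty) :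
    (Ty.subst U t).Ground := by
  induction t with
  | var n => exact hU n
  | const k => trivial
  | arrow a b iha ihb => exact ⟨iha, ihb⟩

lemma Ty.ground_of_subst {U : ℕ → Ty} {t : Ty} (h : (Ty.subst U t).Ground) :
    ∀ n ∈ t.vars, (U n).Ground := by
  induction t with
  | var m =>
    intro n hn
    simp [Ty.vars] at hn
    subst hn
    exact h
  | const k => intro n hn; simp [Ty.vars] at hn
  | arrow a b iha ihb =>
    intro n hn
    rcases hn with hn | hn
    · exact iha h.1 n hn
    · exact ihb h.2 n hn

lemma Ty.subst_congr {S₀ S₁ : ℕ → Ty} {t : Ty} (h : ∀ n ∈ t.vars, S₀ n = S₁ n) :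
    Ty.subst S₀ t = Ty.subst S₁ t := by
  induction t with
  | var n => exact h n (by simp [Ty.vars])
  | const k => rfl
  | arrow a b iha ihb =>
    simp only [Ty.subst]
    exact congrArg₂ Ty.arrow (iha fun n hn => h n (Set.mem_union_left _ hn))
      (ihb fun n hn => h n (Set.mem_union_right _ hn))

lemma Ty.vars_eq_of_subst {S₀ S₁ : ℕ → Ty} {t : Ty}
    (h : Ty.subst S₀ t = Ty.subst S₁ t) : ∀ n ∈ t.vars, S₀ n = S₁ n := by
  induction t with
  | var m =>
    intro n hn
    simp [Ty.vars] at hn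
    subst hn
    exact h
  | const k => intro n hn; simp [Ty.vars] at hn
  | arrow a b iha ihb =>
    intro n hn
    simp only [Ty.subst, Ty.arrow.injEq] at h
    rcases hn with hn | hn
    · exact iha h.1 n hn
    · exact ihb h.2 n hn

lemma eqOn_ftv {S₀ S₁ : ℕ → Ty} {π : OPred} {X : Set ℕ}
    (h : AgreeOn X (π.args.map (Ty.subst S₀)) (π.args.map (Ty.subst S₁))) :
    ∀ n ∈ π.ftvAt X, S₀ n = S₁ n := by
  intro n hn
  simp only [OPred.ftvAt, Set.mem_iUnion] at hn
  obtain ⟨i, hi, hn⟩ := hn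
  have hh := h i hi
  simp only [List.getElem?_map] at hh
  cases harg : π.args[i]? with
  | none => rw [harg] at hn; simp at hn
  | some t =>
    rw [harg] at hn hh
    simp only [Option.map_some] at hh
    exact Ty.vars_eq_of_subst (Option.some.inj hh) n hn

lemma agree_of_eqOn_ftv {S₀ S₁ : ℕ → Ty} {π : OPred} {X : Set ℕ}
    (h : ∀ n ∈ π.ftvAt X, S₀ n = S₁ n) :
    AgreeOn X (π.args.map (Ty.subst S₀)) (π.args.map (Ty.subst S₁)) := by
  intro i hi
  simp only [List.getElem?_map]
  cases harg : π.args[i]? with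
  | none => rfl
  | some t =>
    simp only [Option.map_some]
    congr 1
    apply Ty.subst_congr
    intro n hn
    apply h
    simp only [OPred.ftvAt, Set.mem_iUnion]
    exact ⟨i, hi, by rw [harg]; exact hn⟩

lemma entails_subst {A : Set Axm} {P' : Set OPred} {π : OPred}
    (h : Entails A P' π) (U : ℕ → Ty)
    (hP : ∀ ρ ∈ P', Entails A ∅ (ρ.subst U)) : Entails A ∅ (π.subst U) := by
  induction h with
  | assume hmem => exact hP _ hmem
  | axm hax heq hctx ih =>
    subst heq
    rw [OPred.subst_comp]
    exact Entails.axm hax rfl (fun q hq => by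
      rw [← OPred.subst_comp]; exact ih q hq)

lemma determined {F : Set (ℕ × Set ℕ × Set ℕ)} {A : Set Axm}
    (hnono : Nono F A) (hcov : Cov F A) {E : Set OPred} {π₁ : OPred}
    (h1 : Entails A E π₁) :
    E = ∅ → ∀ π₂ : OPred, Entails A ∅ π₂ → π₁.cls = π₂.cls →
      ∀ X Y : Set ℕ, (π₁.cls, X, Y) ∈ F → AgreeOn X π₁.args π₂.args →
        AgreeOn Y π₁.args π₂.args := by
  induction h1 with
  | assume hmem =>
    intro hE
    rw [hE] at hmem
    exact absurd hmem (Set.notMem_empty _)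
  | axm hax heq hctx =>
    rename_i ax S₀ π ih
    intro hE π₂ h2 hcls X Y hF hagree
    cases h2 with
    | assume hmem => exact absurd hmem (Set.notMem_empty _)
    | axm hax' heq' hctx' =>
      rename_i ax' S₁
      subst heq; subst heq'
      have hcls0 : ax.head.cls = ax'.head.cls := hcls
      have hF0 : (ax.head.cls, X, Y) ∈ F := hF
      have haxeq : ax = ax' := by
        by_contra hne
        exact hnono ax hax ax' hax' hne hcls0 X Y hF0 ⟨S₀, S₁, hagree⟩
      subst haxeq
      have hbase : ∀ n ∈ ax.head.ftvAt X, S₀ n = S₁ n := eqOn_ftv hagree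
      have hclos : ∀ m, InClosure (fdInst F {q | q ∈ ax.ctx}) (ax.head.ftvAt X) m →
          S₀ m = S₁ m := by
        intro m hm
        induction hm with
        | base hn => exact hbase _ hn
        | step hUV hall hnV ih2 =>
          rename_i U V n
          obtain ⟨q, hq, X', Y', hF', hd⟩ := hUV
          have hU : U = q.ftvAt X' := congrArg Prod.fst hd
          have hV : V = q.ftvAt Y' := congrArg Prod.snd hd
          have hXeq : ∀ k ∈ q.ftvAt X', S₀ k = S₁ k := fun k hk => ih2 k (hU ▸ hk)
          have hagree' : AgreeOn X' ((q.subst S₀).args) ((q.subst S₁).args) :=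
            agree_of_eqOn_ftv hXeq
          have hY' : AgreeOn Y' ((q.subst S₀).args) ((q.subst S₁).args) :=
            ih q hq hE (q.subst S₁) (hctx' q hq) rfl X' Y' hF' hagree'
          exact eqOn_ftv hY' n (hV ▸ hnV)
      have hYeq : ∀ n ∈ ax.head.ftvAt Y, S₀ n = S₁ n := by
        intro n hn
        exact hclos n (hcov ax hax X Y hF0 hn)
      exact agree_of_eqOn_ftv hYeq

end Aux

/-- Soundness of improvement: if `S` improves `P` (via the Fundep rule), then the
satisfiable ground instances of `P` and of `S P` coincide. -/
theorem improvement_sound (F : Set (ℕ × Set ℕ × Set ℕ)) (A : Set Axm)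
    (hnono : Nono F A) (hcov : Cov F A)
    {S : ℕ → Ty} {P : List OPred} (himp : Improves F A S P) :
    grPreds A P = grPreds A (P.map (OPred.subst S)) := by
  obtain ⟨C, ts, us, X, Y, ht, hu, hF, hagX, hSY, hmgu⟩ := himp
  ext Q
  constructor
  · rintro ⟨U, hUg, hUent, rfl⟩
    have htU : Entails A ∅ (OPred.subst U ⟨C, ts⟩) :=
      entails_subst ht U (fun ρ hρ => hUent ρ hρ)
    have huU : Entails A ∅ (OPred.subst U ⟨C, us⟩) :=
      entails_subst hu U (fun ρ hρ => hUent ρ hρ)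
    have hagXU : AgreeOn X ((OPred.subst U ⟨C, ts⟩).args) ((OPred.subst U ⟨C, us⟩).args) := by
      intro i hi
      simp only [OPred.subst, List.getElem?_map, hagX i hi]
    have hagYU : AgreeOn Y ((OPred.subst U ⟨C, ts⟩).args) ((OPred.subst U ⟨C, us⟩).args) :=
      determined hnono hcov htU rfl _ huU rfl X Y hF hagXU
    have hYU : ∀ y ∈ Y, ts[y]?.map (Ty.subst U) = us[y]?.map (Ty.subst U) := by
      intro y hy
      have := hagYU y hy
      simpa only [OPred.subst, List.getElem?_map] using this
    obtain ⟨U', hU'⟩ := hmgu U hYU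
    have hfac : ∀ π : OPred, π.subst U = (π.subst S).subst U' := by
      intro π
      rw [OPred.subst_comp]
      simp only [OPred.subst, OPred.mk.injEq, true_and]
      apply List.map_congr_left
      intro t _
      exact Ty.subst_congr (fun n _ => hU' n)
    have key : ∀ ρ : OPred, (ρ.subst S).subst (groundify U') = ρ.subst U := by
      intro ρ
      rw [hfac ρ]
      have hgr : ∀ t ∈ (ρ.subst S).args, (Ty.subst U' t).Ground := by
        intro t ht'
        have hmem : Ty.subst U' t ∈ ((ρ.subst S).subst U').args := by
          simp only [OPred.subst, List.mem_map] at ht' ⊢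
          obtain ⟨a, ha, rfl⟩ := ht'
          exact ⟨Ty.subst S a, ⟨a, ha, rfl⟩, rfl⟩
        rw [← hfac ρ] at hmem
        simp only [OPred.subst, List.mem_map] at hmem
        obtain ⟨a, _, heq⟩ := hmem
        rw [← heq]
        exact Ty.ground_subst hUg a
      simp only [OPred.subst, OPred.mk.injEq, true_and]
      apply List.map_congr_left
      intro t ht'
      apply Ty.subst_congr
      intro n hn
      unfold groundify
      rw [if_pos (Ty.ground_of_subst (hgr t ht') n hn)]
    refine ⟨groundify U', groundify_ground U', ?_, ?_⟩
    · intro π hπ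
      simp only [List.mem_map] at hπ
      obtain ⟨ρ, hρ, rfl⟩ := hπ
      rw [key ρ]
      exact hUent ρ hρ
    · rw [List.map_map]
      apply List.map_congr_left
      intro ρ _
      simp only [Function.comp_apply]
      exact (key ρ).symm
  · rintro ⟨U, hUg, hUent, rfl⟩
    refine ⟨fun n => Ty.subst U (S n), ?_, ?_, ?_⟩
    · intro n
      exact Ty.ground_subst hUg (S n)
    · intro π hπ
      rw [← OPred.subst_comp]
      exact hUent (π.subst S) (List.mem_map_of_mem hπ)
    · rw [List.map_map]
      apply List.map_congr_left
      intro ρ _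
      simp only [Function.comp_apply]
      exact OPred.subst_comp U S ρ
end

section
/- For pairwise distinct variable indices n₁, …, n_k, predicates π₁, …, π_m and a type τ, the recursively defined set of ground instances satisfies the closed form gr(∀n₁. ⋯ ∀n_k. π₁ ⇒ ⋯ ⇒ π_m ⇒ τ) = { S τ | S a substitution with S nᵢ ground for each 1 ≤ i ≤ k and S m = var m for every m ∉ {n₁, …, n_k}, such that ∅ ⊩_A S πⱼ for every 1 ≤ j ≤ m }. -/
/-- Qualified types `ρ ::= τ | π ⇒ ρ`. -/
inductive QualTy : Type
  | base : Ty → QualTy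
  | qual : OPred → QualTy → QualTy

/-- Type schemes `σ ::= ρ | ∀n. σ`. -/
inductive Scheme : Type
  | rho : QualTy → Scheme
  | all : ℕ → Scheme → Scheme

/-- The single-point substitution `[τ₀/n]`. -/
def pointSubst (n : ℕ) (τ₀ : Ty) : ℕ → Ty := fun m => if m = n then τ₀ else .var m

/-- `[τ₀/n]ρ` on qualified types. -/
def QualTy.substVar (n : ℕ) (τ₀ : Ty) : QualTy → QualTy
  | .base τ => .base (τ.subst (pointSubst n τ₀))
  | .qual π ρ => .qual (π.subst (pointSubst n τ₀)) (ρ.substVar n τ₀)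

/-- `[τ₀/n]σ` on type schemes: replace `var n` by `τ₀` throughout. -/
def Scheme.substVar (n : ℕ) (τ₀ : Ty) : Scheme → Scheme
  | .rho ρ => .rho (ρ.substVar n τ₀)
  | .all m σ => .all m (σ.substVar n τ₀)

open Classical in
/-- The ground instances of a qualified type: `gr(τ) = {τ}`; `gr(π ⇒ ρ)` is `gr(ρ)`
if `∅ ⊩_A π` and `∅` otherwise. -/
noncomputable def grQ (A : Set Axm) : QualTy → Set Ty
  | .base τ => {τ}
  | .qual π ρ => if Entails A ∅ π then grQ A ρ else ∅

def Scheme.size : Scheme → ℕ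
  | .rho _ => 0
  | .all _ σ => σ.size + 1

theorem Scheme.size_substVar (n : ℕ) (τ₀ : Ty) (σ : Scheme) :
    (σ.substVar n τ₀).size = σ.size := by
  induction σ with
  | rho _ => rfl
  | all m σ ih => simp [Scheme.substVar, Scheme.size, ih]

/-- The ground instances of a type scheme:
`gr(∀n. σ) = ⋃ (τ₀ ground), gr([τ₀/n]σ)`. -/
noncomputable def grS (A : Set Axm) : Scheme → Set Ty
  | .rho ρ => grQ A ρ
  | .all n σ => ⋃ τ₀ ∈ { τ : Ty | τ.Ground }, grS A (σ.substVar n τ₀)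
  termination_by σ => σ.size
  decreasing_by simp [Scheme.size_substVar, Scheme.size]

lemma Ty.subst_var (t : Ty) : t.subst Ty.var = t := by
  induction t with
  | var n => rfl
  | const k => rfl
  | arrow a b iha ihb => simp [Ty.subst, iha, ihb]

lemma OPred.subst_var (p : OPred) : p.subst Ty.var = p := by
  cases p with
  | mk c args => simp [OPred.subst, List.map_congr_left (fun t _ => Ty.subst_var t)]

lemma Ty.subst_subst (S1 S2 : ℕ → Ty) (t : Ty) :
    (t.subst S1).subst S2 = t.subst (fun m => (S1 m).subst S2) := by
  induction t with
  | var n => rfl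
  | const k => rfl
  | arrow a b iha ihb => simp [Ty.subst, iha, ihb]

lemma OPred.subst_subst (S1 S2 : ℕ → Ty) (p : OPred) :
    (p.subst S1).subst S2 = p.subst (fun m => (S1 m).subst S2) := by
  cases p with
  | mk c args =>
    simp [OPred.subst, Function.comp, Ty.subst_subst]

lemma Ty.subst_of_ground {t : Ty} (h : t.Ground) (S : ℕ → Ty) : t.subst S = t := by
  induction t with
  | var n => exact absurd h id
  | const k => rfl
  | arrow a b iha ihb =>
    simp [Ty.subst, iha h.1, ihb h.2]

lemma Ty.ground_subst_s8 {t : Ty} {S : ℕ → Ty} (h : t.Ground) : (t.subst S).Ground := by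
  rw [Ty.subst_of_ground h]; exact h

lemma substVar_foldr (n : ℕ) (τ₀ : Ty) (ns : List ℕ) (πs : List OPred) (τ : Ty) :
    Scheme.substVar n τ₀ (ns.foldr Scheme.all (Scheme.rho (πs.foldr QualTy.qual (QualTy.base τ)))) =
    ns.foldr Scheme.all (Scheme.rho
      ((πs.map (OPred.subst (pointSubst n τ₀))).foldr QualTy.qual
        (QualTy.base (τ.subst (pointSubst n τ₀))))) := by
  induction ns with
  | nil =>
    simp only [List.foldr_nil, Scheme.substVar]
    congr 1
    induction πs with
    | nil => rfl
    | cons π πs ih => simp [QualTy.substVar, ih]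
  | cons m ms ih => simp [Scheme.substVar, ih]

lemma grQ_foldr (A : Set Axm) (πs : List OPred) (τ : Ty) (υ : Ty) :
    υ ∈ grQ A (πs.foldr QualTy.qual (QualTy.base τ)) ↔
      (∀ π ∈ πs, Entails A ∅ π) ∧ υ = τ := by
  induction πs with
  | nil => simp [grQ]
  | cons π πs ih =>
    by_cases h : Entails A ∅ π
    · simp [grQ, h, ih]
    · simp [grQ, h]

/-- Closed form for the ground instances of a type scheme
`∀n₁. ⋯ ∀n_k. π₁ ⇒ ⋯ ⇒ π_m ⇒ τ` with pairwise distinct bound variables `nᵢ`: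
they are the images `S τ` under substitutions `S` that are ground on the `nᵢ`,
the identity elsewhere, and satisfy `∅ ⊩_A S πⱼ` for every `j`. -/
theorem grS_closed_form (A : Set Axm) (ns : List ℕ) (hns : ns.Nodup)
    (πs : List OPred) (τ : Ty) :
    grS A (ns.foldr Scheme.all (Scheme.rho (πs.foldr QualTy.qual (QualTy.base τ)))) =
    { υ : Ty | ∃ S : ℕ → Ty,
        (∀ n ∈ ns, (S n).Ground) ∧
        (∀ m, m ∉ ns → S m = Ty.var m) ∧
        (∀ π ∈ πs, Entails A ∅ (π.subst S)) ∧
        υ = τ.subst S } := by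
    induction ns generalizing πs τ with
    | nil =>
      ext υ
      simp only [List.foldr_nil, grS, Set.mem_setOf_eq]
      rw [grQ_foldr]
      constructor
      · rintro ⟨h1, h2⟩
        exact ⟨Ty.var, by simp, fun m _ => rfl,
          fun π hπ => by rw [OPred.subst_var]; exact h1 π hπ,
          by rw [Ty.subst_var]; exact h2⟩
      · rintro ⟨S, -, hid, hent, rfl⟩
        have hS : S = Ty.var := funext fun m => hid m (by simp)
        subst hS
        exact ⟨fun π hπ => by simpa [OPred.subst_var] using hent π hπ, (Ty.subst_var τ)⟩
    | cons n ns ih =>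
      ext υ
      simp only [List.foldr_cons, grS, Set.mem_iUnion, Set.mem_setOf_eq]
      constructor
      · rintro ⟨τ₀, hτ₀, hmem⟩
        rw [substVar_foldr, ih (List.nodup_cons.mp hns).2] at hmem
        obtain ⟨S', hg, hid, hent, rfl⟩ := hmem
        refine ⟨fun m => if m = n then τ₀ else S' m, ?_, ?_, ?_, ?_⟩
        · intro m hm
          rcases List.mem_cons.mp hm with rfl | hm2
          · simpa using hτ₀
          · have hmn : m ≠ n := by
              rintro rfl; exact (List.nodup_cons.mp hns).1 hm2
            simpa [hmn] using hg m hm2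
        · intro m hm
          have h1 : m ≠ n := fun h => hm (by simp [h])
          have h2 : m ∉ ns := fun h => hm (by simp [h])
          simp [h1, hid m h2]
        · intro π hπ
          have := hent (π.subst (pointSubst n τ₀)) (List.mem_map_of_mem hπ)
          rwa [OPred.subst_subst, show (fun m => (pointSubst n τ₀ m).subst S') =
            (fun m => if m = n then τ₀ else S' m) from
            funext fun m => by
              by_cases h : m = n <;> simp [pointSubst, h, Ty.subst, Ty.subst_of_ground hτ₀]] at this
        · rw [Ty.subst_subst]
          congr 1
          funext m
          by_cases h : m = n <;> simp [pointSubst, h, Ty.subst, Ty.subst_of_ground hτ₀]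
      · rintro ⟨S, hg, hid, hent, rfl⟩
        have hτ₀ : (S n).Ground := hg n (by simp)
        refine ⟨S n, hτ₀, ?_⟩
        rw [substVar_foldr, ih (List.nodup_cons.mp hns).2]
        refine ⟨fun m => if m = n then Ty.var n else S m, ?_, ?_, ?_, ?_⟩
        · intro m hm
          have hmn : m ≠ n := by
            rintro rfl; exact (List.nodup_cons.mp hns).1 hm
          simpa [hmn] using hg m (by simp [hm])
        · intro m hm
          by_cases h : m = n
          · simp [h]
          · have : m ∉ n :: ns := by simp [h, hm]
            simp [h, hid m this]
        · intro π hπ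
          obtain ⟨π', hπ', rfl⟩ := List.mem_map.mp hπ
          have := hent π' hπ'
          rwa [OPred.subst_subst, show (fun m => (pointSubst n (S n) m).subst
            (fun m => if m = n then Ty.var n else S m)) = S from
            funext fun m => by
              by_cases h : m = n <;>
                simp [pointSubst, h, Ty.subst, Ty.subst_of_ground hτ₀]]
        · rw [Ty.subst_subst]
          congr 1
          funext m
          by_cases h : m = n <;>
            simp [pointSubst, h, Ty.subst, Ty.subst_of_ground hτ₀]
end
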